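/- Let n_1, n_2 ≥ 0. Let μ, μ' ∈ ℝ^{n_1} and ν, ν' ∈ ℝ^{n_2} be nonincreasing vectors with all entries nonnegative. Assume that Σ_{i=1}^k μ_i ≤ Σ_{i=1}^k μ'_i for every 1 ≤ k ≤ n_1 and Σ_{i=1}^k ν_i ≤ Σ_{i=1}^k ν'_i for every 1 ≤ k ≤ n_2. Let Ξ (respectively Ξ') be the nonincreasing vector in ℝ^{n_1+n_2} whose multiset of entries is {μ_1, …, μ_{n_1}} ⊎ {ν_1, …, ν_{n_2}} (respectively {μ'_1, …, μ'_{n_1}} ⊎ {ν'_1, …, ν'_{n_2}}). Then Σ_{i=1}^k Ξ_i ≤ Σ_{i=1}^k Ξ'_i for every 1 ≤ k ≤ n_1+n_2; moreover, if Ξ = Ξ', then μ = μ' and ν = ν'. -/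

import Mathlib

/-- The first `k` entries' partial sum of a vector in `ℝ^n`. -/
def psum {n : ℕ} (v : Fin n → ℝ) (k : ℕ) : ℝ :=
  ∑ i : Fin n, if (i : ℕ) < k then v i else 0

/-- The multiset of entries of a vector in `ℝ^n`. -/
def entries {n : ℕ} (v : Fin n → ℝ) : Multiset ℝ :=
  Finset.univ.val.map v

def topM {n : ℕ} (v : Fin n → ℝ) (k : ℕ) : Multiset ℝ :=
  (Finset.univ.filter fun i : Fin n => (i : ℕ) < k).val.map v

def botM {n : ℕ} (v : Fin n → ℝ) (k : ℕ) : Multiset ℝ :=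
  (Finset.univ.filter fun i : Fin n => ¬ (i : ℕ) < k).val.map v

lemma psum_eq_top_sum {n : ℕ} (v : Fin n → ℝ) (k : ℕ) : psum v k = (topM v k).sum := by
  rw [psum, ← Finset.sum_filter, Finset.sum_eq_multiset_sum, topM]

lemma card_filter_lt {n : ℕ} {k : ℕ} (hk : k ≤ n) :
    (Finset.univ.filter fun i : Fin n => (i : ℕ) < k).card = k := by
  have : (Finset.univ.filter fun i : Fin n => (i : ℕ) < k)
      = Finset.univ.map (Fin.castLEEmb hk) := by
    ext i
    simp only [Finset.mem_filter, Finset.mem_univ, true_and, Finset.mem_map]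
    constructor
    · intro h; exact ⟨⟨i, h⟩, rfl⟩
    · rintro ⟨a, rfl⟩; exact a.isLt
  rw [this, Finset.card_map, Finset.card_univ, Fintype.card_fin]

lemma card_topM {n : ℕ} (v : Fin n → ℝ) {k : ℕ} (hk : k ≤ n) : (topM v k).card = k := by
  rw [topM, Multiset.card_map, ← Finset.card_def, card_filter_lt hk]

lemma topM_le_entries {n : ℕ} (v : Fin n → ℝ) (k : ℕ) : topM v k ≤ entries v := by
  rw [topM, entries]
  exact Multiset.map_le_map (by rw [Finset.filter_val]; exact Multiset.filter_le _ _)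

lemma topM_add_botM {n : ℕ} (v : Fin n → ℝ) (k : ℕ) : topM v k + botM v k = entries v := by
  rw [topM, botM, entries, ← Multiset.map_add, Finset.filter_val, Finset.filter_val,
    Multiset.filter_add_not]

lemma card_entries {n : ℕ} (v : Fin n → ℝ) : (entries v).card = n := by
  rw [entries, Multiset.card_map]; simp

lemma psum_zero {n : ℕ} (v : Fin n → ℝ) : psum v 0 = 0 := by simp [psum]

lemma topM_all {n : ℕ} (v : Fin n → ℝ) {k : ℕ} (hk : n ≤ k) : topM v k = entries v := by
  rw [topM, entries]
  congr 1
  rw [Finset.filter_true_of_mem fun i _ => lt_of_lt_of_le i.isLt hk]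

lemma psum_all {n : ℕ} (v : Fin n → ℝ) : psum v n = (entries v).sum := by
  rw [psum_eq_top_sum, topM_all v le_rfl]

lemma sum_le_psum {n : ℕ} {v : Fin n → ℝ} (hv : Antitone v) {S : Multiset ℝ}
    (hS : S ≤ entries v) {j : ℕ} (hcard : S.card = j) (hj : j ≤ n) :
    S.sum ≤ psum v j := by
  rcases Nat.eq_zero_or_pos j with rfl | hj1
  · rw [Multiset.card_eq_zero] at hcard
    simp [hcard, psum_zero]
  · have hjn : j - 1 < n := by omega
    set t := v ⟨j - 1, hjn⟩ with ht
    set g : ℝ → ℝ := fun x => max (x - t) 0 with hg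
    have hg0 : ∀ x, 0 ≤ g x := fun x => le_max_right _ _
    have step1 : S.sum ≤ (S.card : ℝ) * t + (S.map g).sum := by
      have : S.sum = (S.map id).sum := by rw [Multiset.map_id]
      rw [this]
      have h2 : (S.map fun x => t + g x).sum = (S.map fun _ => t).sum + (S.map g).sum := by
        rw [← Multiset.sum_map_add]
      have h3 : (S.map fun _ : ℝ => t).sum = (S.card : ℝ) * t := by
        rw [Multiset.map_const', Multiset.sum_replicate, nsmul_eq_mul]
      calc (S.map id).sum ≤ (S.map fun x => t + g x).sum := by
            apply Multiset.sum_map_le_sum_map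
            intro x _
            simp only [id, hg]
            rcases le_total x t with h | h
            · have : max (x - t) 0 = 0 ∨ max (x-t) 0 ≥ 0 := Or.inr (le_max_right _ _)
              nlinarith [le_max_right (x - t) (0:ℝ)]
            · nlinarith [le_max_left (x - t) (0:ℝ)]
        _ = (S.card : ℝ) * t + (S.map g).sum := by rw [h2, h3]
    have step2 : (S.map g).sum ≤ ((entries v).map g).sum := by
      have hsplit : (entries v - S) + S = entries v := tsub_add_cancel_of_le hS
      calc (S.map g).sum ≤ ((entries v - S).map g).sum + (S.map g).sum := by
            have : 0 ≤ ((entries v - S).map g).sum := by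
              apply Multiset.sum_nonneg
              intro x hx
              obtain ⟨y, _, rfl⟩ := Multiset.mem_map.1 hx
              exact hg0 y
            linarith
        _ = ((entries v).map g).sum := by rw [← Multiset.sum_add, ← Multiset.map_add, hsplit]
    have step3 : ((entries v).map g).sum = psum v j - (j : ℝ) * t := by
      have h1 : ((entries v).map g).sum = ∑ i : Fin n, g (v i) := by
        rw [entries, Multiset.map_map, Finset.sum_eq_multiset_sum]
        rfl
      have h2 : ∀ i : Fin n, g (v i) = if (i : ℕ) < j then v i - t else 0 := by
        intro i
        by_cases hi : (i : ℕ) < j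
        · have : t ≤ v i := hv (show i ≤ (⟨j - 1, hjn⟩ : Fin n) by simp only [Fin.le_def]; omega)
          simp only [hg, hi, if_true]
          exact max_eq_left (by linarith)
        · have : v i ≤ t := hv (show (⟨j - 1, hjn⟩ : Fin n) ≤ i by simp only [Fin.le_def]; omega)
          simp only [hg, hi, if_false]
          exact max_eq_right (by linarith)
      rw [h1]
      have h3 : ∑ i : Fin n, g (v i)
          = (∑ i : Fin n, if (i : ℕ) < j then v i else 0)
            - ∑ i : Fin n, if (i : ℕ) < j then t else 0 := by
        rw [← Finset.sum_sub_distrib]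
        apply Finset.sum_congr rfl
        intro i _
        rw [h2 i]
        split_ifs <;> simp
      have h4 : (∑ i : Fin n, if (i : ℕ) < j then t else 0) = (j : ℝ) * t := by
        rw [← Finset.sum_filter, Finset.sum_const, card_filter_lt hj, nsmul_eq_mul]
      rw [h3, h4, psum]
    rw [hcard] at step1
    linarith

lemma sum_le_of_thresh {S T C : Multiset ℝ} {t : ℝ}
    (hST : S ≤ T + C) (hcard : S.card = T.card)
    (hT : ∀ x ∈ T, t ≤ x) (hC : ∀ x ∈ C, x ≤ t) : S.sum ≤ T.sum := by
  set S₁ := S - C with hS₁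
  set S₂ := S ∩ C with hS₂
  have hsplit : S₁ + S₂ = S := Multiset.sub_add_inter S C
  have hS₁T : S₁ ≤ T := by rw [hS₁, Multiset.sub_le_iff_le_add]; exact hST
  have hS₂C : S₂ ≤ C := Multiset.inter_le_right
  have hTsplit : S₁ + (T - S₁) = T := add_tsub_cancel_of_le hS₁T
  have hcards : S₁.card + S₂.card = S.card := by rw [← hsplit]; exact (Multiset.card_add _ _).symm
  have hcardT : S₁.card + (T - S₁).card = T.card := by
    rw [← Multiset.card_add, hTsplit]
  have hc2 : S₂.card = (T - S₁).card := by omega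
  have h1 : S₂.sum ≤ (S₂.card : ℝ) * t := by
    have := Multiset.sum_le_card_nsmul S₂ t (fun x hx => hC x (Multiset.mem_of_le hS₂C hx))
    simpa [nsmul_eq_mul] using this
  have h2 : ((T - S₁).card : ℝ) * t ≤ (T - S₁).sum := by
    have := Multiset.card_nsmul_le_sum
      (fun x hx => hT x (Multiset.mem_of_le (tsub_le_self (a := T) (b := S₁)) hx))
    simpa [nsmul_eq_mul] using this
  have h3 : S.sum = S₁.sum + S₂.sum := by rw [← hsplit, Multiset.sum_add]
  have h4 : T.sum = S₁.sum + (T - S₁).sum := by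
    conv_lhs => rw [← hTsplit]
    rw [Multiset.sum_add]
  rw [hc2] at h1
  rw [h3, h4]
  linarith

lemma top_sum_eq (n k : ℕ) (v : Fin n → ℝ) (hk : k ≤ n) : (topM v k).sum = psum v k :=
  (psum_eq_top_sum v k).symm

/-- sum of top j of μ plus top l of ν is at most psum Ξ (j+l). -/
lemma psums_le_psum {m n₁ n₂ : ℕ} (hm : m = n₁ + n₂)
    {μ : Fin n₁ → ℝ} {ν : Fin n₂ → ℝ} {Ξ : Fin m → ℝ}
    (hΞm : Antitone Ξ) (hE : entries Ξ = entries μ + entries ν)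
    {j l : ℕ} (hj : j ≤ n₁) (hl : l ≤ n₂) :
    psum μ j + psum ν l ≤ psum Ξ (j + l) := by
  have hS : topM μ j + topM ν l ≤ entries Ξ := by
    rw [hE]
    exact add_le_add (topM_le_entries μ j) (topM_le_entries ν l)
  have hcard : (topM μ j + topM ν l).card = j + l := by
    rw [Multiset.card_add, card_topM μ hj, card_topM ν hl]
  have := sum_le_psum hΞm hS hcard (by omega)
  rwa [Multiset.sum_add, ← psum_eq_top_sum μ j, ← psum_eq_top_sum ν l] at this

/-- attainment for each k -/
lemma exists_jl {m n₁ n₂ : ℕ} (hm : m = n₁ + n₂)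
    {μ : Fin n₁ → ℝ} {ν : Fin n₂ → ℝ} {Ξ : Fin m → ℝ}
    (hμ : Antitone μ) (hν : Antitone ν)
    (hE : entries Ξ = entries μ + entries ν)
    {k : ℕ} (hk : k ≤ m) :
    ∃ j l, j ≤ n₁ ∧ l ≤ n₂ ∧ j + l = k ∧ psum Ξ k ≤ psum μ j + psum ν l := by
  set S := topM Ξ k with hSdef
  have hS : S ≤ entries μ + entries ν := hE ▸ topM_le_entries Ξ k
  set S₁ := S - entries ν with hS₁
  set S₂ := S ∩ entries ν with hS₂
  have hsplit : S₁ + S₂ = S := Multiset.sub_add_inter S (entries ν)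
  have hS₁A : S₁ ≤ entries μ := by rw [hS₁, Multiset.sub_le_iff_le_add]; exact hS
  have hS₂B : S₂ ≤ entries ν := Multiset.inter_le_right
  refine ⟨S₁.card, S₂.card, ?_, ?_, ?_, ?_⟩
  · have := Multiset.card_le_card hS₁A; rwa [card_entries] at this
  · have := Multiset.card_le_card hS₂B; rwa [card_entries] at this
  · rw [← Multiset.card_add, hsplit, hSdef, card_topM Ξ hk]
  · have h1 := sum_le_psum hμ hS₁A rfl
      (by have := Multiset.card_le_card hS₁A; rwa [card_entries] at this)
    have h2 := sum_le_psum hν hS₂B rfl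
      (by have := Multiset.card_le_card hS₂B; rwa [card_entries] at this)
    have h3 : psum Ξ k = S₁.sum + S₂.sum := by
      rw [psum_eq_top_sum, ← hSdef, ← hsplit, Multiset.sum_add]
    linarith

lemma mem_topM {n : ℕ} {v : Fin n → ℝ} {k : ℕ} {x : ℝ} (hx : x ∈ topM v k) :
    ∃ i : Fin n, (i : ℕ) < k ∧ v i = x := by
  rw [topM] at hx
  obtain ⟨i, hi, rfl⟩ := Multiset.mem_map.1 hx
  rw [Finset.mem_val, Finset.mem_filter] at hi
  exact ⟨i, hi.2, rfl⟩

lemma mem_botM {n : ℕ} {v : Fin n → ℝ} {k : ℕ} {x : ℝ} (hx : x ∈ botM v k) :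
    ∃ i : Fin n, ¬ (i : ℕ) < k ∧ v i = x := by
  rw [botM] at hx
  obtain ⟨i, hi, rfl⟩ := Multiset.mem_map.1 hx
  rw [Finset.mem_val, Finset.mem_filter] at hi
  exact ⟨i, hi.2, rfl⟩

lemma exists_l_attain {m n₁ n₂ : ℕ} (hm : m = n₁ + n₂)
    {μ : Fin n₁ → ℝ} {ν : Fin n₂ → ℝ} {Ξ : Fin m → ℝ}
    (hμ : Antitone μ) (hν : Antitone ν)
    (hE : entries Ξ = entries μ + entries ν)
    {j : ℕ} (hj : j ≤ n₁) :
    ∃ l ≤ n₂, psum Ξ (j + l) ≤ psum μ j + psum ν l := by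
  subst hm
  rcases eq_or_lt_of_le hj with rfl | hjlt
  · refine ⟨n₂, le_rfl, le_of_eq ?_⟩
    rw [psum_all, psum_all, psum_all, hE, Multiset.sum_add]
  · set t := μ ⟨j, hjlt⟩ with ht
    set F := Finset.univ.filter fun i : Fin n₂ => t < ν i with hF
    set l := F.card with hl
    have hln : l ≤ n₂ := by
      rw [hl]
      exact (Finset.card_filter_le _ _).trans (by simp)
    have hFeq : F = Finset.univ.filter fun i : Fin n₂ => (i : ℕ) < l := by
      ext i
      simp only [hF, Finset.mem_filter, Finset.mem_univ, true_and]
      constructor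
      · intro h
        have hsub : Finset.Iic i ⊆ F := by
          intro i' hi'
          rw [Finset.mem_Iic] at hi'
          rw [hF, Finset.mem_filter]
          exact ⟨Finset.mem_univ _, lt_of_lt_of_le h (hν hi')⟩
        have hcard := Finset.card_le_card hsub
        rw [Fin.card_Iic] at hcard
        omega
      · intro h
        by_contra hcon
        push_neg at hcon
        have hsub : F ⊆ Finset.Iio i := by
          intro i' hi'
          rw [hF, Finset.mem_filter] at hi'
          rw [Finset.mem_Iio]
          by_contra hge
          push_neg at hge
          exact absurd (lt_of_lt_of_le hi'.2 (hν hge)) (not_lt.2 hcon)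
        have hcard := Finset.card_le_card hsub
        rw [Fin.card_Iio] at hcard
        omega
    have hmemF : ∀ i : Fin n₂, (i : ℕ) < l ↔ t < ν i := by
      intro i
      constructor
      · intro h
        have : i ∈ F := by rw [hFeq, Finset.mem_filter]; exact ⟨Finset.mem_univ _, h⟩
        rw [hF, Finset.mem_filter] at this; exact this.2
      · intro h
        have : i ∈ F := by rw [hF, Finset.mem_filter]; exact ⟨Finset.mem_univ _, h⟩
        rw [hFeq, Finset.mem_filter] at this; exact this.2
    refine ⟨l, hln, ?_⟩
    set T := topM μ j + topM ν l with hT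
    set C := botM μ j + botM ν l with hC
    have hTC : entries Ξ = T + C := by
      rw [hE, ← topM_add_botM μ j, ← topM_add_botM ν l, hT, hC, add_add_add_comm]
    have hTt : ∀ x ∈ T, t ≤ x := by
      intro x hx
      rcases Multiset.mem_add.1 hx with hx | hx
      · obtain ⟨i, hi, rfl⟩ := mem_topM hx
        exact hμ (show i ≤ (⟨j, hjlt⟩ : Fin n₁) by simp only [Fin.le_def]; omega)
      · obtain ⟨i, hi, rfl⟩ := mem_topM hx
        exact le_of_lt ((hmemF i).1 hi)
    have hCt : ∀ x ∈ C, x ≤ t := by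
      intro x hx
      rcases Multiset.mem_add.1 hx with hx | hx
      · obtain ⟨i, hi, rfl⟩ := mem_botM hx
        exact hμ (show (⟨j, hjlt⟩ : Fin n₁) ≤ i by simp only [Fin.le_def]; omega)
      · obtain ⟨i, hi, rfl⟩ := mem_botM hx
        have := (hmemF i).not.1 hi
        push_neg at this
        exact this
    have hcardT : T.card = j + l := by
      rw [hT, Multiset.card_add, card_topM μ (le_of_lt hjlt), card_topM ν hln]
    have hcardS : (topM Ξ (j + l)).card = j + l := card_topM Ξ (by omega)
    have hmain := sum_le_of_thresh (hTC ▸ topM_le_entries Ξ (j + l))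
      (hcardS.trans hcardT.symm) hTt hCt
    rw [hT, Multiset.sum_add, ← psum_eq_top_sum, ← psum_eq_top_sum, ← psum_eq_top_sum] at hmain
    exact hmain

lemma psum_succ {n : ℕ} (v : Fin n → ℝ) {k : ℕ} (hk : k < n) :
    psum v (k + 1) = psum v k + v ⟨k, hk⟩ := by
  rw [psum, psum]
  have key : ∀ i : Fin n, (if (i : ℕ) < k + 1 then v i else 0)
      = (if (i : ℕ) < k then v i else 0) + (if i = ⟨k, hk⟩ then v i else 0) := by
    intro i
    simp only [Fin.ext_iff]
    split_ifs <;> first | (exfalso; omega) | ring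
  rw [Finset.sum_congr rfl fun i _ => key i, Finset.sum_add_distrib]
  congr 1
  simp

theorem stmt2 (n₁ n₂ : ℕ)
    (μ μ' : Fin n₁ → ℝ) (ν ν' : Fin n₂ → ℝ)
    (hμ : Antitone μ) (hμ' : Antitone μ')
    (hν : Antitone ν) (hν' : Antitone ν')
    (hμ0 : ∀ i, 0 ≤ μ i) (hμ'0 : ∀ i, 0 ≤ μ' i)
    (hν0 : ∀ i, 0 ≤ ν i) (hν'0 : ∀ i, 0 ≤ ν' i)
    (hμps : ∀ k, 1 ≤ k → k ≤ n₁ → psum μ k ≤ psum μ' k)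
    (hνps : ∀ k, 1 ≤ k → k ≤ n₂ → psum ν k ≤ psum ν' k)
    (Ξ Ξ' : Fin (n₁ + n₂) → ℝ)
    (hΞmono : Antitone Ξ) (hΞ'mono : Antitone Ξ')
    (hΞ : entries Ξ = entries μ + entries ν)
    (hΞ' : entries Ξ' = entries μ' + entries ν') :
    (∀ k, 1 ≤ k → k ≤ n₁ + n₂ → psum Ξ k ≤ psum Ξ' k) ∧
      (Ξ = Ξ' → μ = μ' ∧ ν = ν') := by
  have hμle : ∀ j, j ≤ n₁ → psum μ j ≤ psum μ' j := by
    intro j hj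
    rcases Nat.eq_zero_or_pos j with rfl | hj1
    · simp [psum_zero]
    · exact hμps j hj1 hj
  have hνle : ∀ l, l ≤ n₂ → psum ν l ≤ psum ν' l := by
    intro l hl
    rcases Nat.eq_zero_or_pos l with rfl | hl1
    · simp [psum_zero]
    · exact hνps l hl1 hl
  constructor
  · intro k _ hk2
    obtain ⟨j, l, hj, hl, hjl, hatt⟩ := exists_jl rfl hμ hν hΞ hk2
    have h3 := psums_le_psum rfl hΞ'mono hΞ' hj hl
    rw [hjl] at h3
    have := hμle j hj
    have := hνle l hl
    linarith
  · intro hEq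
    subst hEq
    have keyμ : ∀ j, j ≤ n₁ → psum μ j = psum μ' j := by
      intro j hj
      obtain ⟨l, hl, hatt⟩ := exists_l_attain rfl hμ hν hΞ hj
      have hge := psums_le_psum rfl hΞmono hΞ' hj hl
      have := hμle j hj
      have := hνle l hl
      linarith
    have keyν : ∀ l, l ≤ n₂ → psum ν l = psum ν' l := by
      intro l hl
      obtain ⟨j, hj, hatt⟩ := exists_l_attain (m := n₁ + n₂) (n₁ := n₂) (n₂ := n₁)
        (by omega) hν hμ (by rw [hΞ, add_comm]) hl
      have hge := psums_le_psum (m := n₁ + n₂) (n₁ := n₂) (n₂ := n₁)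
        (by omega) hΞmono (by rw [hΞ', add_comm]) hl hj
      have := hμle j hj
      have := hνle l hl
      linarith
    constructor
    · funext i
      have e1 := keyμ i (le_of_lt i.isLt)
      have e2 := keyμ (i + 1) i.isLt
      have s1 := psum_succ μ i.isLt
      have s2 := psum_succ μ' i.isLt
      simp only [Fin.eta] at s1 s2
      linarith
    · funext i
      have e1 := keyν i (le_of_lt i.isLt)
      have e2 := keyν (i + 1) i.isLt
      have s1 := psum_succ ν i.isLt
      have s2 := psum_succ ν' i.isLt
      simp only [Fin.eta] at s1 s2
      linarith
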